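/- Let G be a λ-dense bipartite graph with adjacency matrix A and doubly stochastic scaling Q = D_α A D_β, and set r_i = n · max_j Q_{ij}. Then (1/n) Σ_{i=1}^n r_i ≤ 1/2 + 1/(4λ). -/

import Mathlib

open Finset

/-- For the doubly stochastic scaling `Q = D_α A D_β` of a λ-dense bipartite graph's
adjacency matrix, with `r_i = n · max_j Q_{ij}`, one has `(1/n) Σ_i r_i ≤ 1/2 + 1/(4λ)`. -/
theorem doubly_stochastic_scaling_row_max_average_bound
    (n : ℕ) (hn : 0 < n) (lam : ℝ) (hlam : 0 < lam) (hlam' : lam < 1 / 2)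
    (A : Matrix (Fin n) (Fin n) ℝ) (h01 : ∀ i j, A i j = 0 ∨ A i j = 1)
    (hrowdeg : ∀ i, ((1 / 2 + lam) * n : ℝ) < ∑ j, A i j)
    (hcoldeg : ∀ j, ((1 / 2 + lam) * n : ℝ) < ∑ i, A i j)
    (α β : Fin n → ℝ) (hα : ∀ i, 0 < α i) (hβ : ∀ j, 0 < β j)
    (Q : Matrix (Fin n) (Fin n) ℝ) (hQ : ∀ i j, Q i j = α i * A i j * β j)
    (hrows : ∀ i, ∑ j, Q i j = 1) (hcols : ∀ j, ∑ i, Q i j = 1)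
    (r : Fin n → ℝ)
    (hr : ∀ i, r i = n * univ.sup' (Finset.univ_nonempty_iff.mpr ⟨⟨0, hn⟩⟩)
        (fun j => Q i j)) :
    (1 / n : ℝ) * ∑ i, r i ≤ 1 / 2 + 1 / (4 * lam) := by
  have hn' : (0:ℝ) < n := by exact_mod_cast hn
  have hA0 : ∀ i j, 0 ≤ A i j := by
    intro i j; rcases h01 i j with h | h <;> simp [h]
  have hA1 : ∀ i j, A i j ≤ 1 := by
    intro i j; rcases h01 i j with h | h <;> simp [h]
  have hQ0 : ∀ i j, 0 ≤ Q i j := by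
    intro i j; rw [hQ]
    exact mul_nonneg (mul_nonneg (hα i).le (hA0 i j)) (hβ j).le
  -- cardinalities of neighborhoods
  have hcardS : ∀ i : Fin n,
      ((1/2+lam)*n : ℝ) < ((univ.filter fun k => A i k = 1).card : ℝ) := by
    intro i
    have e1 : ∑ k ∈ univ.filter (fun k => A i k = 1), A i k = ∑ k, A i k :=
      Finset.sum_subset (Finset.filter_subset _ _) (fun k _ hk => by
        simp only [Finset.mem_filter, Finset.mem_univ, true_and] at hk
        rcases h01 i k with h | h
        · exact h
        · exact absurd h hk)
    have e2 : ∑ k ∈ univ.filter (fun k => A i k = 1), A i k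
        = ((univ.filter fun k => A i k = 1).card : ℝ) := by
      rw [Finset.sum_congr rfl (fun k hk => (Finset.mem_filter.mp hk).2)]
      simp
    have := hrowdeg i
    rw [← e1, e2] at this
    exact this
  have hcardT : ∀ j : Fin n,
      ((1/2+lam)*n : ℝ) < ((univ.filter fun l => A l j = 1).card : ℝ) := by
    intro j
    have e1 : ∑ l ∈ univ.filter (fun l => A l j = 1), A l j = ∑ l, A l j :=
      Finset.sum_subset (Finset.filter_subset _ _) (fun l _ hl => by
        simp only [Finset.mem_filter, Finset.mem_univ, true_and] at hl
        rcases h01 l j with h | h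
        · exact h
        · exact absurd h hl)
    have e2 : ∑ l ∈ univ.filter (fun l => A l j = 1), A l j
        = ((univ.filter fun l => A l j = 1).card : ℝ) := by
      rw [Finset.sum_congr rfl (fun l hl => (Finset.mem_filter.mp hl).2)]
      simp
    have := hcoldeg j
    rw [← e1, e2] at this
    exact this
  -- entrywise bound
  have key : ∀ i j, Q i j ≤ 1 / (2 * lam * n) := by
    intro i j
    have hden : (0:ℝ) < 2 * lam * n := by positivity
    rcases h01 i j with hz | ho
    · rw [hQ, hz]; rw [mul_zero, zero_mul]; positivity
    set S := univ.filter fun k => A i k = 1 with hS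
    set T := univ.filter fun l => A l j = 1 with hT
    have eS1 : ∑ k ∈ S, Q i k = ∑ k, Q i k :=
      Finset.sum_subset (Finset.filter_subset _ _) (fun k _ hk => by
        simp only [hS, Finset.mem_filter, Finset.mem_univ, true_and] at hk
        rcases h01 i k with h | h
        · rw [hQ, h]; ring
        · exact absurd h hk)
    have eS2 : ∑ k ∈ S, Q i k = ∑ k ∈ S, α i * β k :=
      Finset.sum_congr rfl (fun k hk => by
        have := (Finset.mem_filter.mp hk).2
        rw [hQ, this]; ring)
    have hrowS : α i * ∑ k ∈ S, β k = 1 := by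
      rw [Finset.mul_sum, ← eS2, eS1, hrows i]
    have eT1 : ∑ l ∈ T, Q l j = ∑ l, Q l j :=
      Finset.sum_subset (Finset.filter_subset _ _) (fun l _ hl => by
        simp only [hT, Finset.mem_filter, Finset.mem_univ, true_and] at hl
        rcases h01 l j with h | h
        · rw [hQ, h]; ring
        · exact absurd h hl)
    have eT2 : ∑ l ∈ T, Q l j = ∑ l ∈ T, β j * α l :=
      Finset.sum_congr rfl (fun l hl => by
        have := (Finset.mem_filter.mp hl).2
        rw [hQ, this]; ring)
    have hcolT : β j * ∑ l ∈ T, α l = 1 := by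
      rw [Finset.mul_sum, ← eT2, eT1, hcols j]
    -- mass of submatrix T × S
    have hScard' : ((S.card : ℝ)) ≤ n := by
      exact_mod_cast Finset.card_le_card (Finset.subset_univ S) |>.trans_eq (by simp)
    have hmass_lower : 2 * lam * n < ∑ l ∈ T, ∑ k ∈ S, Q l k := by
      have hsplit : ∀ l, ∑ k ∈ S, Q l k = 1 - ∑ k ∈ Sᶜ, Q l k := by
        intro l
        have := Finset.sum_add_sum_compl S (fun k => Q l k)
        rw [hrows l] at this
        linarith
      have h4 : ∑ l, ∑ k ∈ Sᶜ, Q l k = ((Sᶜ.card : ℝ)) := by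
        rw [show ∑ l, ∑ k ∈ Sᶜ, Q l k = ∑ k ∈ Sᶜ, ∑ l, Q l k from Finset.sum_comm]
        rw [Finset.sum_congr rfl (fun k _ => hcols k)]
        simp
      have h5 : ((Sᶜ.card : ℝ)) = (n : ℝ) - S.card := by
        have hle : S.card ≤ n := by
          exact_mod_cast hScard'
        rw [Finset.card_compl, Fintype.card_fin, Nat.cast_sub hle]
      have h3 : ∑ l ∈ T, ∑ k ∈ Sᶜ, Q l k ≤ (n : ℝ) - S.card := by
        calc ∑ l ∈ T, ∑ k ∈ Sᶜ, Q l k ≤ ∑ l, ∑ k ∈ Sᶜ, Q l k :=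
              Finset.sum_le_sum_of_subset_of_nonneg (Finset.subset_univ T)
                (fun l _ _ => Finset.sum_nonneg fun k _ => hQ0 l k)
          _ = (n : ℝ) - S.card := by rw [h4, h5]
      have h6 : ∑ l ∈ T, ∑ k ∈ S, Q l k
          = (T.card : ℝ) - ∑ l ∈ T, ∑ k ∈ Sᶜ, Q l k := by
        rw [Finset.sum_congr rfl (fun l _ => hsplit l), Finset.sum_sub_distrib]
        simp
      have hTcard := hcardT j
      have hScardlt := hcardS i
      rw [h6]
      have hT' : ((1/2+lam)*n : ℝ) < (T.card : ℝ) := hTcard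
      have hS' : ((1/2+lam)*n : ℝ) < (S.card : ℝ) := hScardlt
      nlinarith
    have hmass_upper : ∑ l ∈ T, ∑ k ∈ S, Q l k ≤ (∑ l ∈ T, α l) * (∑ k ∈ S, β k) := by
      rw [Finset.sum_mul_sum]
      apply Finset.sum_le_sum
      intro l _
      apply Finset.sum_le_sum
      intro k _
      rw [hQ]
      have h1 : α l * A l k * β k ≤ α l * 1 * β k := by
        apply mul_le_mul_of_nonneg_right _ (hβ k).le
        exact mul_le_mul_of_nonneg_left (hA1 l k) (hα l).le
      simpa using h1
    have hprod : α i * β j * ((∑ l ∈ T, α l) * (∑ k ∈ S, β k)) = 1 := by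
      calc α i * β j * ((∑ l ∈ T, α l) * (∑ k ∈ S, β k))
          = (α i * ∑ k ∈ S, β k) * (β j * ∑ l ∈ T, α l) := by ring
        _ = 1 := by rw [hrowS, hcolT]; ring
    have hpos : (0:ℝ) < α i * β j := mul_pos (hα i) (hβ j)
    have h7 : 2 * lam * n * (α i * β j) < 1 := by
      have h8 : 2 * lam * n < (∑ l ∈ T, α l) * (∑ k ∈ S, β k) :=
        lt_of_lt_of_le hmass_lower hmass_upper
      calc 2 * lam * n * (α i * β j)
          < (∑ l ∈ T, α l) * (∑ k ∈ S, β k) * (α i * β j) :=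
            mul_lt_mul_of_pos_right h8 hpos
        _ = 1 := by rw [← hprod]; ring
    rw [hQ, ho, mul_one]
    rw [le_div_iff₀ hden]
    nlinarith
  -- r bound
  have hrbound : ∀ i, r i ≤ 1 / (2 * lam) := by
    intro i
    rw [hr]
    have hsup : univ.sup' (Finset.univ_nonempty_iff.mpr ⟨⟨0, hn⟩⟩) (fun j => Q i j)
        ≤ 1 / (2 * lam * n) := Finset.sup'_le _ _ (fun j _ => key i j)
    calc (n:ℝ) * univ.sup' _ (fun j => Q i j) ≤ n * (1 / (2 * lam * n)) :=
          mul_le_mul_of_nonneg_left hsup hn'.le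
      _ = 1 / (2 * lam) := by field_simp
  -- choose j* maximizing β
  obtain ⟨js, _, hjs⟩ := Finset.exists_max_image univ β
    (Finset.univ_nonempty_iff.mpr ⟨⟨0, hn⟩⟩)
  set Ts := univ.filter fun i => A i js = 1 with hTs
  have hrTs : ∀ i ∈ Ts, r i = n * Q i js := by
    intro i hi
    rw [hr]
    congr 1
    apply le_antisymm
    · apply Finset.sup'_le
      intro j _
      rw [hQ, hQ, (Finset.mem_filter.mp hi).2, mul_one]
      rcases h01 i j with h | h
      · rw [h]
        nlinarith [hα i, hβ js]
      · rw [h, mul_one]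
        exact mul_le_mul_of_nonneg_left (hjs j (mem_univ j)) (hα i).le
    · exact Finset.le_sup' _ (mem_univ js)
  have hsumTs : ∑ i ∈ Ts, r i = n := by
    rw [Finset.sum_congr rfl hrTs, ← Finset.mul_sum]
    have e1 : ∑ i ∈ Ts, Q i js = ∑ i, Q i js :=
      Finset.sum_subset (Finset.filter_subset _ _) (fun i _ hi => by
        simp only [hTs, Finset.mem_filter, Finset.mem_univ, true_and] at hi
        rcases h01 i js with h | h
        · rw [hQ, h]; ring
        · exact absurd h hi)
    rw [e1, hcols js, mul_one]
  have hsumTc : ∑ i ∈ Tsᶜ, r i ≤ ((n : ℝ) - Ts.card) * (1 / (2 * lam)) := by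
    have h1 : ∑ i ∈ Tsᶜ, r i ≤ (Tsᶜ.card : ℝ) * (1 / (2 * lam)) := by
      have := Finset.sum_le_card_nsmul Tsᶜ r (1 / (2 * lam)) (fun i _ => hrbound i)
      simpa [nsmul_eq_mul] using this
    have hle : Ts.card ≤ n := by
      have := Finset.card_le_card (Finset.subset_univ Ts)
      simpa using this
    have h2 : (Tsᶜ.card : ℝ) = (n : ℝ) - Ts.card := by
      rw [Finset.card_compl, Fintype.card_fin, Nat.cast_sub hle]
    rw [h2] at h1
    exact h1
  have hTscard : ((1/2+lam)*n : ℝ) < (Ts.card : ℝ) := hcardT js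
  have htotal : ∑ i, r i ≤ (n : ℝ) + ((1/2 - lam) * n) * (1 / (2 * lam)) := by
    have hsc := Finset.sum_add_sum_compl Ts r
    rw [← hsc, hsumTs]
    have hfac : (0:ℝ) < 1 / (2 * lam) := by positivity
    nlinarith
  have h9 : (1 / n : ℝ) * ∑ i, r i
      ≤ (1/n) * ((n:ℝ) + ((1/2 - lam) * n) * (1 / (2 * lam))) :=
    mul_le_mul_of_nonneg_left htotal (by positivity)
  have h10 : (1/n:ℝ) * ((n:ℝ) + ((1/2 - lam) * n) * (1 / (2 * lam)))
      = 1/2 + 1/(4*lam) := by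
    field_simp
    ring
  linarith
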